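/- Let Z be a P×P real matrix, k, p ∈ ℝ^P, d := Z·k, and define h(v) := Z(k − D(v)p) where D(v) = diag(1/v_1,...,1/v_P). Let C_R := {v : ‖v − d‖_q ≤ R} for some q ≥ 1 and R > 0, and set underline-d := min_n |d_n|. If (C1) R ≤ underline-d, (C2) R(underline-d − R) ≥ ‖Z‖_q·‖p‖_q, and (C3) (underline-d − R)² > ‖Z‖_q·‖p‖_q, then h is a contraction on C_R: h maps C_R into C_R and ‖h(v) − h(ṽ)‖_q ≤ α‖v − ṽ‖_q for all v, ṽ ∈ C_R with α = ‖Z‖_q‖p‖_q/(underline-d − R)² < 1. -/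

import Mathlib

open scoped ENNReal

/-- The ℓ_q norm of a vector in ℝ^P. -/
noncomputable def vnorm (q : ℝ≥0∞) [Fact (1 ≤ q)] {P : ℕ} (x : Fin P → ℝ) : ℝ :=
  ‖(WithLp.equiv q (Fin P → ℝ)).symm x‖

/-- The induced (operator) matrix q-norm of a P×P real matrix. -/
noncomputable def matOpNorm (q : ℝ≥0∞) [Fact (1 ≤ q)] {P : ℕ}
    (Z : Matrix (Fin P) (Fin P) ℝ) : ℝ :=
  ‖LinearMap.toContinuousLinearMap
      ((WithLp.linearEquiv q ℝ (Fin P → ℝ)).symm.toLinearMap ∘ₗ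
        Z.mulVecLin ∘ₗ (WithLp.linearEquiv q ℝ (Fin P → ℝ)).toLinearMap)‖

section helpers
variable (q : ℝ≥0∞) [Fact (1 ≤ q)] {P : ℕ}

lemma toReal_pos_of_ne_top (hq : q ≠ ∞) : 0 < q.toReal := by
  have h1 : (1 : ℝ≥0∞) ≤ q := Fact.out
  exact ENNReal.toReal_pos (by intro h; simp [h] at h1) hq

lemma vnorm_mono {x y : Fin P → ℝ} (hxy : ∀ n, |x n| ≤ |y n|) :
    vnorm q x ≤ vnorm q y := by
  unfold vnorm
  by_cases hq : q = ∞
  · subst hq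
    rw [PiLp.norm_eq_ciSup, PiLp.norm_eq_ciSup]
    exact ciSup_mono (Set.Finite.bddAbove (Set.finite_range _)) fun n => by
      simpa [Real.norm_eq_abs] using hxy n
  · have hr : 0 < q.toReal := toReal_pos_of_ne_top q hq
    rw [PiLp.norm_eq_sum hr, PiLp.norm_eq_sum hr]
    apply Real.rpow_le_rpow (Finset.sum_nonneg fun n _ => Real.rpow_nonneg (norm_nonneg _) _)
      (Finset.sum_le_sum fun n _ => Real.rpow_le_rpow (norm_nonneg _)
        (by simpa [Real.norm_eq_abs] using hxy n) hr.le)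
      (by positivity)

lemma abs_le_vnorm (x : Fin P → ℝ) (n : Fin P) : |x n| ≤ vnorm q x := by
  unfold vnorm
  by_cases hq : q = ∞
  · subst hq
    rw [PiLp.norm_eq_ciSup]
    simpa [Real.norm_eq_abs] using
      le_ciSup (Set.Finite.bddAbove
        (Set.finite_range fun n => ‖((WithLp.equiv ⊤ (Fin P → ℝ)).symm x) n‖)) n
  · have hr : 0 < q.toReal := toReal_pos_of_ne_top q hq
    rw [PiLp.norm_eq_sum hr]
    have h1 : |x n| ^ q.toReal ≤
        ∑ m, ‖((WithLp.equiv q (Fin P → ℝ)).symm x) m‖ ^ q.toReal := by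
      refine Finset.single_le_sum (f := fun m => ‖((WithLp.equiv q (Fin P → ℝ)).symm x) m‖ ^ q.toReal)
        (fun m _ => Real.rpow_nonneg (norm_nonneg _) _) (Finset.mem_univ n) |>.trans_eq' ?_
      simp [Real.norm_eq_abs]
    calc |x n| = (|x n| ^ q.toReal) ^ (1 / q.toReal) := by
          rw [one_div, Real.rpow_rpow_inv (abs_nonneg _) hr.ne']
      _ ≤ _ := Real.rpow_le_rpow (Real.rpow_nonneg (abs_nonneg _) _) h1 (by positivity)

lemma vnorm_smul (c : ℝ) (x : Fin P → ℝ) : vnorm q (c • x) = |c| * vnorm q x := by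
  unfold vnorm
  rw [WithLp.equiv_symm_apply, WithLp.toLp_smul, norm_smul, Real.norm_eq_abs]

lemma vnorm_neg (x : Fin P → ℝ) : vnorm q (-x) = vnorm q x := by
  unfold vnorm; rw [WithLp.equiv_symm_apply, WithLp.toLp_neg, norm_neg]

lemma vnorm_mulVec_le (Z : Matrix (Fin P) (Fin P) ℝ) (x : Fin P → ℝ) :
    vnorm q (Z.mulVec x) ≤ matOpNorm q Z * vnorm q x := by
  have hle := (LinearMap.toContinuousLinearMap
      ((WithLp.linearEquiv q ℝ (Fin P → ℝ)).symm.toLinearMap ∘ₗ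
        Z.mulVecLin ∘ₗ (WithLp.linearEquiv q ℝ (Fin P → ℝ)).toLinearMap)).le_opNorm
      ((WithLp.equiv q (Fin P → ℝ)).symm x)
  simpa [vnorm, matOpNorm, Matrix.mulVecLin] using hle

end helpers

/-- The Z-bus mapping h(v) = Z(k − D(v)p) is a contraction on the ball C_R around
d = Z·k under conditions (C1)–(C3). -/
theorem zbus_contraction {P : ℕ} (hP : 0 < P) (q : ℝ≥0∞) [Fact (1 ≤ q)]
    (Z : Matrix (Fin P) (Fin P) ℝ) (k p : Fin P → ℝ) (R : ℝ) (hR : 0 < R)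
    (d : Fin P → ℝ) (hd : d = Z.mulVec k)
    (h : (Fin P → ℝ) → (Fin P → ℝ))
    (hh : ∀ v, h v = Z.mulVec (fun n => k n - p n / v n))
    (ud : ℝ) (hud : ud = ⨅ n, |d n|)
    (hC1 : R ≤ ud)
    (hC2 : R * (ud - R) ≥ matOpNorm q Z * vnorm q p)
    (hC3 : (ud - R) ^ 2 > matOpNorm q Z * vnorm q p) :
    (∀ v : Fin P → ℝ, vnorm q (v - d) ≤ R → vnorm q (h v - d) ≤ R) ∧
    matOpNorm q Z * vnorm q p / (ud - R) ^ 2 < 1 ∧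
    (∀ v vt : Fin P → ℝ, vnorm q (v - d) ≤ R → vnorm q (vt - d) ≤ R →
      vnorm q (h v - h vt) ≤ (matOpNorm q Z * vnorm q p / (ud - R) ^ 2) * vnorm q (v - vt)) := by
  have hNP : Nonempty (Fin P) := ⟨⟨0, hP⟩⟩
  set N := matOpNorm q Z with hN
  set np := vnorm q p with hnp
  have hNnn : 0 ≤ N := norm_nonneg _
  have hnpnn : 0 ≤ np := norm_nonneg _
  have hsnn : 0 ≤ N * np := mul_nonneg hNnn hnpnn
  -- ud - R > 0
  have hudR : 0 < ud - R := by
    rcases lt_or_eq_of_le (sub_nonneg.mpr hC1) with h0 | h0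
    · exact h0
    · exfalso; rw [← h0] at hC3; simp at hC3; linarith
  -- coordinate lower bound on the ball
  have key : ∀ v : Fin P → ℝ, vnorm q (v - d) ≤ R → ∀ n, ud - R ≤ |v n| := by
    intro v hv n
    have h1 : ud ≤ |d n| := by
      rw [hud]
      exact ciInf_le (Set.Finite.bddBelow (Set.finite_range _)) n
    have h2 : |v n - d n| ≤ R := by
      have := abs_le_vnorm q (v - d) n
      simpa using this.trans hv
    have h3 : |d n| - |v n| ≤ |v n - d n| := by
      rw [abs_sub_comm]; exact abs_sub_abs_le_abs_sub _ _
    linarith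
  have hvne : ∀ v : Fin P → ℝ, vnorm q (v - d) ≤ R → ∀ n, v n ≠ 0 := by
    intro v hv n hvn
    have := key v hv n
    rw [hvn] at this; simp at this; linarith
  refine ⟨?_, ?_, ?_⟩
  · -- invariance
    intro v hv
    have heq : h v - d = Z.mulVec (-(fun n => p n / v n)) := by
      have hvec : ((fun n => k n - p n / v n) - k) = -(fun n => p n / v n) := by
        funext n
        show k n - p n / v n - k n = -(p n / v n)
        ring
      rw [hh, hd, ← Matrix.mulVec_sub, hvec]
    have hb : vnorm q (h v - d) ≤ N * vnorm q (fun n => p n / v n) := by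
      rw [heq]
      calc vnorm q (Z.mulVec (-(fun n => p n / v n)))
          ≤ N * vnorm q (-(fun n => p n / v n)) := vnorm_mulVec_le q Z _
        _ = N * vnorm q (fun n => p n / v n) := by rw [vnorm_neg]
    have hmono : vnorm q (fun n => p n / v n) ≤ (1 / (ud - R)) * np := by
      have := vnorm_mono q (x := fun n => p n / v n) (y := (1 / (ud - R)) • p) ?_
      · calc vnorm q (fun n => p n / v n) ≤ vnorm q ((1 / (ud - R)) • p) := this
          _ = |1 / (ud - R)| * np := vnorm_smul q _ p
          _ = (1 / (ud - R)) * np := by rw [abs_of_pos (by positivity)]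
      · intro n
        show |p n / v n| ≤ |((1 / (ud - R)) • p) n|
        have hk := key v hv n
        have hne := hvne v hv n
        rw [Pi.smul_apply, smul_eq_mul, abs_div, abs_mul, abs_of_pos (a := 1 / (ud - R)) (by positivity)]
        rw [div_le_iff₀ (lt_of_lt_of_le hudR hk)]
        calc |p n| = (1 / (ud - R)) * |p n| * (ud - R) := by field_simp
          _ ≤ (1 / (ud - R)) * |p n| * |v n| := by
              apply mul_le_mul_of_nonneg_left hk (by positivity)
    have : vnorm q (h v - d) ≤ N * ((1 / (ud - R)) * np) :=
      hb.trans (mul_le_mul_of_nonneg_left hmono hNnn)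
    have hfin : N * ((1 / (ud - R)) * np) ≤ R := by
      rw [show N * ((1 / (ud - R)) * np) = N * np / (ud - R) by ring]
      exact (div_le_iff₀ hudR).mpr (by linarith)
    exact this.trans hfin
  · exact (div_lt_one (by positivity)).mpr hC3
  · -- contraction
    intro v vt hv hvt
    set c := vnorm q (v - vt) / (ud - R) ^ 2 with hc
    have hcnn : 0 ≤ c := div_nonneg (norm_nonneg _) (by positivity)
    have heq : h v - h vt = Z.mulVec (fun n => p n / vt n - p n / v n) := by
      have hvec : ((fun n => k n - p n / v n) - fun n => k n - p n / vt n)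
          = fun n => p n / vt n - p n / v n := by
        funext n
        show k n - p n / v n - (k n - p n / vt n) = p n / vt n - p n / v n
        ring
      rw [hh, hh, ← Matrix.mulVec_sub, hvec]
    have hb : vnorm q (h v - h vt) ≤ N * vnorm q (fun n => p n / vt n - p n / v n) := by
      rw [heq]; exact vnorm_mulVec_le q Z _
    have hmono : vnorm q (fun n => p n / vt n - p n / v n) ≤ c * np := by
      have := vnorm_mono q (x := fun n => p n / vt n - p n / v n) (y := c • p) ?_
      · calc _ ≤ vnorm q (c • p) := this
          _ = |c| * np := vnorm_smul q _ p
          _ = c * np := by rw [abs_of_nonneg hcnn]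
      · intro n
        show |p n / vt n - p n / v n| ≤ |(c • p) n|
        have hkv := key v hv n
        have hkvt := key vt hvt n
        have hnev := hvne v hv n
        have hnevt := hvne vt hvt n
        have hvpos : 0 < |v n| := lt_of_lt_of_le hudR hkv
        have hvtpos : 0 < |vt n| := lt_of_lt_of_le hudR hkvt
        have hent : p n / vt n - p n / v n = p n * (v n - vt n) / (v n * vt n) := by
          field_simp
        rw [hent, Pi.smul_apply, smul_eq_mul, abs_mul, abs_of_nonneg hcnn]
        rw [abs_div, abs_mul, abs_mul]
        have hvvt : (ud - R) ^ 2 ≤ |v n| * |vt n| := by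
          calc (ud - R)^2 = (ud - R) * (ud - R) := sq (ud - R) ▸ rfl
            _ ≤ |v n| * |vt n| := mul_le_mul hkv hkvt hudR.le (abs_nonneg _)
        have hdiff : |v n - vt n| ≤ vnorm q (v - vt) := by
          have := abs_le_vnorm q (v - vt) n
          simpa using this
        rw [div_le_iff₀ (by positivity)]
        calc |p n| * |v n - vt n| ≤ |p n| * vnorm q (v - vt) :=
              mul_le_mul_of_nonneg_left hdiff (abs_nonneg _)
          _ = c * |p n| * (ud - R)^2 := by rw [hc]; field_simp
          _ ≤ c * |p n| * (|v n| * |vt n|) := by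
              apply mul_le_mul_of_nonneg_left hvvt (by positivity)
    calc vnorm q (h v - h vt) ≤ N * (c * np) := hb.trans (mul_le_mul_of_nonneg_left hmono hNnn)
      _ = N * np / (ud - R) ^ 2 * vnorm q (v - vt) := by rw [hc]; field_simp
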